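/- Let γ ∈ (0,1), let m ≥ 1, let r = ⌈log₂(2m+4)⌉ and s = ⌈√(2/γ)⌉. Let v_1, …, v_m, v_b, v_t, v' ∈ ℝ^d each of Euclidean norm at most 1, and define the polynomial p : ℝ^d → ℝ by p(x) = m + 5/2 − Σ_{i=1}^m (T_s(1 − ⟨v_i, x⟩))^r − (T_s(1 − ⟨x − v_b, v'⟩/2))^r − (T_s(1 − ⟨v_t − x, v'⟩/2))^r, where T_s is the s-th Chebyshev polynomial of the first kind. Then for every x ∈ ℝ^d with ‖x‖ ≤ 1 such that ⟨v_i, x⟩ ≥ γ for all i ∈ {1,…,m}, ⟨x, v'⟩ ≥ ⟨v_b, v'⟩ + γ, and ⟨x, v'⟩ ≤ ⟨v_t, v'⟩ − γ, it holds that p(x) ≥ 1/2. -/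
import Mathlib


open Finset RealInnerProductSpace

lemma cheb_pow_le_one (n : ℤ) (r : ℕ) {y : ℝ} (h1 : -1 ≤ y) (h2 : y ≤ 1) :
    ((Polynomial.Chebyshev.T ℝ n).eval y) ^ r ≤ 1 := by
  have hy : y = Real.cos (Real.arccos y) := (Real.cos_arccos h1 h2).symm
  rw [hy, Polynomial.Chebyshev.T_real_cos]
  calc Real.cos (n * Real.arccos y) ^ r ≤ |Real.cos (n * Real.arccos y) ^ r| :=
        le_abs_self _
    _ = |Real.cos (n * Real.arccos y)| ^ r := by rw [abs_pow]
    _ ≤ 1 := pow_le_one₀ (abs_nonneg _) (Real.abs_cos_le_one _)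

/-- With `r = ⌈log₂(2m+4)⌉`, `s = ⌈√(2/γ)⌉` and unit-norm vectors
`v_1, …, v_m, v_b, v_t, v'`, the function
`p(x) = m + 5/2 − Σ_i T_s(1 − ⟨v_i,x⟩)^r − T_s(1 − ⟨x−v_b,v'⟩/2)^r − T_s(1 − ⟨v_t−x,v'⟩/2)^r`
satisfies `p(x) ≥ 1/2` on the positive region. -/
theorem sep_poly_eval_ge_half {d m : ℕ} (hm : 1 ≤ m) (γ : ℝ)
    (hγ : γ ∈ Set.Ioo (0 : ℝ) 1)
    (r s : ℕ) (hr : r = ⌈Real.logb 2 (2 * m + 4)⌉₊) (hs : s = ⌈Real.sqrt (2 / γ)⌉₊)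
    (v : Fin m → EuclideanSpace ℝ (Fin d)) (vb vt v' : EuclideanSpace ℝ (Fin d))
    (hv : ∀ i, ‖v i‖ ≤ 1) (hvb : ‖vb‖ ≤ 1) (hvt : ‖vt‖ ≤ 1) (hv' : ‖v'‖ ≤ 1)
    (x : EuclideanSpace ℝ (Fin d)) (hx : ‖x‖ ≤ 1)
    (h1 : ∀ i, ⟪v i, x⟫ ≥ γ)
    (h2 : ⟪x, v'⟫ ≥ ⟪vb, v'⟫ + γ)
    (h3 : ⟪x, v'⟫ ≤ ⟪vt, v'⟫ - γ) :
    (m : ℝ) + 5 / 2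
      - ∑ i, ((Polynomial.Chebyshev.T ℝ (s : ℤ)).eval (1 - ⟪v i, x⟫)) ^ r
      - ((Polynomial.Chebyshev.T ℝ (s : ℤ)).eval (1 - ⟪x - vb, v'⟫ / 2)) ^ r
      - ((Polynomial.Chebyshev.T ℝ (s : ℤ)).eval (1 - ⟪vt - x, v'⟫ / 2)) ^ r
      ≥ 1 / 2 := by
  obtain ⟨hγ0, hγ1⟩ := hγ
  have hsum : ∑ i, ((Polynomial.Chebyshev.T ℝ (s : ℤ)).eval (1 - ⟪v i, x⟫)) ^ r ≤ m := by
    calc ∑ i, ((Polynomial.Chebyshev.T ℝ (s : ℤ)).eval (1 - ⟪v i, x⟫)) ^ r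
        ≤ ∑ _i : Fin m, (1 : ℝ) := by
          apply Finset.sum_le_sum
          intro i _
          apply cheb_pow_le_one
          · have := (abs_real_inner_le_norm (v i) x).trans
              (mul_le_one₀ (hv i) (norm_nonneg _) hx)
            have := abs_le.mp this
            linarith [this.2]
          · linarith [h1 i]
      _ = m := by simp
  have hib : |⟪vb, v'⟫| ≤ 1 := (abs_real_inner_le_norm vb v').trans
      (mul_le_one₀ hvb (norm_nonneg _) hv')
  have hit : |⟪vt, v'⟫| ≤ 1 := (abs_real_inner_le_norm vt v').trans
      (mul_le_one₀ hvt (norm_nonneg _) hv')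
  have hix : |⟪x, v'⟫| ≤ 1 := (abs_real_inner_le_norm x v').trans
      (mul_le_one₀ hx (norm_nonneg _) hv')
  rw [abs_le] at hib hit hix
  have e2 : ⟪x - vb, v'⟫ = ⟪x, v'⟫ - ⟪vb, v'⟫ := inner_sub_left x vb v'
  have e3 : ⟪vt - x, v'⟫ = ⟪vt, v'⟫ - ⟪x, v'⟫ := inner_sub_left vt x v'
  have t2 : ((Polynomial.Chebyshev.T ℝ (s : ℤ)).eval (1 - ⟪x - vb, v'⟫ / 2)) ^ r ≤ 1 := by
    apply cheb_pow_le_one <;> rw [e2] <;> [linarith [hix.2, hib.1]; linarith]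
  have t3 : ((Polynomial.Chebyshev.T ℝ (s : ℤ)).eval (1 - ⟪vt - x, v'⟫ / 2)) ^ r ≤ 1 := by
    apply cheb_pow_le_one <;> rw [e3] <;> [linarith [hit.2, hix.1]; linarith]
  linarith
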